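/- Let D be a self-adjoint operator on H and ψ_s(λ) = sλ/(1+s²λ²). For any f holomorphic and bounded on an open neighbourhood of ℝ of the form O = {x+iy : y² < tan²(ω)x² + σ²} with 0 < ω < π/2, σ > 0, the operator (ψ_s f ψ_t)(D) defined by the functional calculus satisfies ‖(ψ_s f ψ_t)(D)‖ ≤ C ‖f‖_∞ · min{s/t, t/s}·(1 + |log(s/t)|) for all s,t > 0, with C depending only on ω, σ. -/
import Mathlib


open scoped Real

lemma psi_prod_le (s t x : ℝ) (hs : 0 < s) (ht : 0 < t) :
    (s * |x| / (1 + s ^ 2 * x ^ 2)) * (t * |x| / (1 + t ^ 2 * x ^ 2)) ≤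
      min (s / t) (t / s) := by
  have h1 : (0:ℝ) < 1 + s ^ 2 * x ^ 2 := by positivity
  have h2 : (0:ℝ) < 1 + t ^ 2 * x ^ 2 := by positivity
  have hx : |x| * |x| = x ^ 2 := by rw [← abs_mul, abs_mul_self]; ring
  refine le_min ?_ ?_
  · rw [div_mul_div_comm, div_le_div_iff₀ (by positivity) ht,
      show s * |x| * (t * |x|) * t = s * t ^ 2 * (|x| * |x|) by ring, hx]
    nlinarith [mul_nonneg hs.le (sq_nonneg (s*x)), mul_nonneg hs.le (sq_nonneg (s*t*x^2)), hs.le]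
  · rw [div_mul_div_comm, div_le_div_iff₀ (by positivity) hs,
      show s * |x| * (t * |x|) * s = t * s ^ 2 * (|x| * |x|) by ring, hx]
    nlinarith [mul_nonneg ht.le (sq_nonneg (t*x)), mul_nonneg ht.le (sq_nonneg (s*t*x^2)), ht.le]

/-- For self-adjoint `D` and `f` bounded holomorphic on the
neighbourhood `O_{ω,σ} = {x+iy : y² < tan²(ω)x² + σ²}` of `ℝ`, with
`ψ_s(λ) = sλ/(1+s²λ²)`, the operator `(ψ_s f ψ_t)(D)` satisfies
`‖(ψ_s f ψ_t)(D)‖ ≤ C‖f‖_∞ min{s/t, t/s}(1 + |log(s/t)|)`,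
with `C` depending only on `ω, σ`. -/
theorem psi_f_psi_norm_bound (ω σ : ℝ) (hω : ω ∈ Set.Ioo 0 (π / 2)) (hσ : 0 < σ) :
    ∃ C > (0 : ℝ),
      ∀ (H : Type) [NormedAddCommGroup H] [InnerProductSpace ℂ H] [CompleteSpace H]
        (D : H →L[ℂ] H), IsSelfAdjoint D →
      ∀ (f : ℂ → ℂ) (M : ℝ),
        DifferentiableOn ℂ f {z : ℂ | z.im ^ 2 < Real.tan ω ^ 2 * z.re ^ 2 + σ ^ 2} →
        (∀ z ∈ {z : ℂ | z.im ^ 2 < Real.tan ω ^ 2 * z.re ^ 2 + σ ^ 2}, ‖f z‖ ≤ M) →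
        ∀ s t : ℝ, 0 < s → 0 < t →
          ‖cfc (fun z : ℂ =>
              ((s : ℂ) * z / (1 + (s : ℂ) ^ 2 * z ^ 2)) * f z *
                ((t : ℂ) * z / (1 + (t : ℂ) ^ 2 * z ^ 2))) D‖ ≤
            C * M * (min (s / t) (t / s) * (1 + |Real.log (s / t)|)) := by
  refine ⟨1, one_pos, ?_⟩
  intro H _ _ _ D hD f M hf hfM s t hs ht
  -- M is nonnegative since 0 ∈ O
  have h0 : (0:ℂ) ∈ {z : ℂ | z.im ^ 2 < Real.tan ω ^ 2 * z.re ^ 2 + σ ^ 2} := by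
    simp [Set.mem_setOf_eq]; positivity
  have hM : 0 ≤ M := le_trans (norm_nonneg _) (hfM 0 h0)
  have hmin : 0 ≤ min (s / t) (t / s) :=
    le_min (by positivity) (by positivity)
  have hlog : (1:ℝ) ≤ 1 + |Real.log (s / t)| := by
    have := abs_nonneg (Real.log (s / t)); linarith
  have hc : (0:ℝ) ≤ 1 * M * (min (s / t) (t / s) * (1 + |Real.log (s / t)|)) := by
    have : (0:ℝ) ≤ 1 + |Real.log (s / t)| := by linarith
    positivity
  refine norm_cfc_le hc ?_
  intro z hz
  have hzim : z.im = 0 := hD.im_eq_zero_of_mem_spectrum hz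
  obtain ⟨x, rfl⟩ : ∃ x : ℝ, z = (x : ℂ) :=
    ⟨z.re, by apply Complex.ext <;> simp [hzim]⟩
  have hzO : ((x:ℂ)) ∈ {z : ℂ | z.im ^ 2 < Real.tan ω ^ 2 * z.re ^ 2 + σ ^ 2} := by
    simp only [Set.mem_setOf_eq, Complex.ofReal_im, Complex.ofReal_re]
    have : (0:ℝ) ≤ Real.tan ω ^ 2 * x ^ 2 := by positivity
    nlinarith
  have hfz : ‖f ((x:ℂ))‖ ≤ M := hfM _ hzO
  -- compute the norms of the ψ factors
  have hden : ∀ u : ℝ, 0 < u → ((1 : ℂ) + (u:ℂ) ^ 2 * (x:ℂ) ^ 2) =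
      ((1 + u ^ 2 * x ^ 2 : ℝ) : ℂ) := by
    intro u hu; push_cast; ring
  have hpsi : ∀ u : ℝ, 0 < u →
      ‖(u : ℂ) * (x:ℂ) / (1 + (u : ℂ) ^ 2 * (x:ℂ) ^ 2)‖ =
        u * |x| / (1 + u ^ 2 * x ^ 2) := by
    intro u hu
    rw [hden u hu, norm_div]
    have h1 : (0:ℝ) < 1 + u ^ 2 * x ^ 2 := by positivity
    rw [show (u : ℂ) * (x:ℂ) = ((u * x : ℝ) : ℂ) by push_cast; ring]
    rw [Complex.norm_real, Complex.norm_real, Real.norm_eq_abs, Real.norm_eq_abs,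
      abs_of_pos h1, abs_mul, abs_of_pos hu]
  have key : ‖((s : ℂ) * (x:ℂ) / (1 + (s : ℂ) ^ 2 * (x:ℂ) ^ 2)) * f (x:ℂ) *
      ((t : ℂ) * (x:ℂ) / (1 + (t : ℂ) ^ 2 * (x:ℂ) ^ 2))‖ ≤
      M * min (s / t) (t / s) := by
    rw [norm_mul, norm_mul, hpsi s hs, hpsi t ht]
    calc s * |x| / (1 + s ^ 2 * x ^ 2) * ‖f (x:ℂ)‖ * (t * |x| / (1 + t ^ 2 * x ^ 2))
        ≤ s * |x| / (1 + s ^ 2 * x ^ 2) * M * (t * |x| / (1 + t ^ 2 * x ^ 2)) := by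
          gcongr
      _ = M * ((s * |x| / (1 + s ^ 2 * x ^ 2)) * (t * |x| / (1 + t ^ 2 * x ^ 2))) := by
          ring
      _ ≤ M * min (s / t) (t / s) := by
          gcongr; exact psi_prod_le s t x hs ht
  calc ‖((s : ℂ) * (x:ℂ) / (1 + (s : ℂ) ^ 2 * (x:ℂ) ^ 2)) * f (x:ℂ) *
      ((t : ℂ) * (x:ℂ) / (1 + (t : ℂ) ^ 2 * (x:ℂ) ^ 2))‖
      ≤ M * min (s / t) (t / s) := key
    _ ≤ 1 * M * (min (s / t) (t / s) * (1 + |Real.log (s / t)|)) := by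
        rw [one_mul, ← mul_assoc]
        nlinarith [mul_nonneg hM hmin]
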